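/- arXiv:1201.3310 — 3 statements merged into one kernel-verified Lean document; each statement's English description precedes it below -/
import Mathlib

section
/- In the single-choice process placing n balls into n bins i.u.r., the expected number of balls of height at least y is at most 4n/y!, where the height of a ball is one more than the number of balls already in its bin at insertion time. -/
open Finset

lemma sum_range_choose' (n k : ℕ) : ∑ i ∈ range n, i.choose k = n.choose (k+1) := by
  induction n with
  | zero => simp
  | succ n ih =>
    rw [Finset.sum_range_succ, ih, Nat.choose_succ_succ']
    ring

lemma count_le (n k : ℕ) (i : Fin n) :
    (Finset.univ.filter (fun f : Fin n → Fin n =>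
      k ≤ (Finset.univ.filter (fun j : Fin n => j < i ∧ f j = f i)).card)).card
      ≤ (i : ℕ).choose k * n ^ (n - k) := by
  classical
  have hsub : (Finset.univ.filter (fun f : Fin n → Fin n =>
      k ≤ (Finset.univ.filter (fun j : Fin n => j < i ∧ f j = f i)).card))
      ⊆ ((Finset.Iio i).powersetCard k).biUnion
        (fun S => Finset.univ.filter (fun f : Fin n → Fin n => ∀ j ∈ S, f j = f i)) := by
    intro f hf
    simp only [mem_filter, mem_univ, true_and] at hf
    obtain ⟨S, hS, hScard⟩ := Finset.exists_subset_card_eq hf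
    refine Finset.mem_biUnion.2 ⟨S, ?_, ?_⟩
    · refine Finset.mem_powersetCard.2 ⟨?_, hScard⟩
      intro j hj
      have := hS hj
      simp only [mem_filter, mem_univ, true_and] at this
      exact Finset.mem_Iio.2 this.1
    · simp only [mem_filter, mem_univ, true_and]
      intro j hj
      have := hS hj
      simp only [mem_filter, mem_univ, true_and] at this
      exact this.2
  calc _ ≤ _ := Finset.card_le_card hsub
    _ ≤ ∑ S ∈ (Finset.Iio i).powersetCard k,
          (Finset.univ.filter (fun f : Fin n → Fin n => ∀ j ∈ S, f j = f i)).card :=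
        Finset.card_biUnion_le
    _ ≤ ∑ S ∈ (Finset.Iio i).powersetCard k, n ^ (n - k) := by
        refine Finset.sum_le_sum fun S hS => ?_
        obtain ⟨hSsub, hScard⟩ := Finset.mem_powersetCard.1 hS
        have hiS : i ∉ S := fun h => lt_irrefl i (Finset.mem_Iio.1 (hSsub h))
        have : (Finset.univ.filter (fun f : Fin n → Fin n => ∀ j ∈ S, f j = f i)).card
            ≤ (Finset.univ : Finset ((↥(Sᶜ : Finset (Fin n))) → Fin n)).card := by
          refine Finset.card_le_card_of_injOn (fun f => fun x => f x.1)
            (fun f _ => Finset.mem_univ _) ?_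
          intro f hf g hg hfg
          simp only [Finset.coe_filter, Set.mem_setOf_eq, mem_univ, true_and] at hf hg
          have hcompl : ∀ x : Fin n, x ∉ S → f x = g x := by
            intro x hx
            exact congrFun hfg ⟨x, Finset.mem_compl.2 hx⟩
          funext j
          by_cases hj : j ∈ S
          · rw [hf j hj, hg j hj, hcompl i hiS]
          · exact hcompl j hj
        calc (Finset.univ.filter (fun f : Fin n → Fin n => ∀ j ∈ S, f j = f i)).card
            ≤ _ := this
          _ = n ^ (n - k) := by
              rw [Finset.card_univ, Fintype.card_fun]
              simp [Finset.card_compl, hScard]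
    _ = (i : ℕ).choose k * n ^ (n - k) := by
        rw [Finset.sum_const, Finset.card_powersetCard, Fin.card_Iio, smul_eq_mul]

/-- Single-choice process: `n` balls are placed sequentially into `n` bins, ball `i`
going into bin `f i` with `f` uniform on `Fin n → Fin n`.  The height of ball `i` is
one more than the number of earlier balls in its bin.  The expected number of balls of
height at least `y` is at most `4n/y!`. -/
theorem stmt_6 (n y : ℕ) (hy : 1 ≤ y) :
    (∑ f : Fin n → Fin n,
        ((Finset.univ.filter (fun i : Fin n =>
          y ≤ (Finset.univ.filter (fun j : Fin n => j < i ∧ f j = f i)).card + 1)).card : ℝ))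
      / (n : ℝ) ^ n ≤ 4 * (n : ℝ) / (Nat.factorial y : ℝ) := by
  classical
  obtain ⟨k, rfl⟩ : ∃ k, y = k + 1 := ⟨y - 1, by omega⟩
  -- natural-number bound on the total sum
  have key : (∑ f : Fin n → Fin n,
      (Finset.univ.filter (fun i : Fin n =>
        k + 1 ≤ (Finset.univ.filter (fun j : Fin n => j < i ∧ f j = f i)).card + 1)).card)
      ≤ n.choose (k+1) * n ^ (n - k) := by
    have swap : (∑ f : Fin n → Fin n,
        (Finset.univ.filter (fun i : Fin n =>
          k + 1 ≤ (Finset.univ.filter (fun j : Fin n => j < i ∧ f j = f i)).card + 1)).card)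
        = ∑ i : Fin n, (Finset.univ.filter (fun f : Fin n → Fin n =>
          k ≤ (Finset.univ.filter (fun j : Fin n => j < i ∧ f j = f i)).card)).card := by
      simp only [Finset.card_filter]
      rw [Finset.sum_comm]
      simp [Nat.add_le_add_iff_right]
    rw [swap]
    calc ∑ i : Fin n, (Finset.univ.filter (fun f : Fin n → Fin n =>
          k ≤ (Finset.univ.filter (fun j : Fin n => j < i ∧ f j = f i)).card)).card
        ≤ ∑ i : Fin n, (i : ℕ).choose k * n ^ (n - k) :=
          Finset.sum_le_sum fun i _ => count_le n k i
      _ = (∑ i ∈ range n, i.choose k) * n ^ (n - k) := by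
          rw [← Finset.sum_mul, Fin.sum_univ_eq_sum_range (fun i => i.choose k) n]
      _ = n.choose (k+1) * n ^ (n - k) := by rw [sum_range_choose']
  have hfac : (0:ℝ) < (Nat.factorial (k+1) : ℝ) := by positivity
  rcases Nat.eq_zero_or_pos n with hn0 | hn0
  · subst hn0
    simp only [Nat.cast_zero, mul_zero, zero_div]
    have : (∑ f : Fin 0 → Fin 0,
        ((Finset.univ.filter (fun i : Fin 0 =>
          k + 1 ≤ (Finset.univ.filter (fun j : Fin 0 => j < i ∧ f j = f i)).card + 1)).card : ℝ)) = 0 := by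
      simp
    rw [this, zero_div]
  by_cases hkn : k ≤ n
  · have hnR : (0:ℝ) < (n:ℝ) := by exact_mod_cast hn0
    have hpow : (0:ℝ) < (n:ℝ)^n := by positivity
    have h1 : (↑(n.choose (k+1) * n ^ (n-k)) : ℝ) ≤ (n:ℝ)^(n+1) / (Nat.factorial (k+1) : ℝ) := by
      push_cast
      calc ((n.choose (k+1) : ℝ)) * (n:ℝ)^(n-k)
          ≤ ((n:ℝ)^(k+1)/(Nat.factorial (k+1) : ℝ)) * (n:ℝ)^(n-k) := by
            apply mul_le_mul_of_nonneg_right (Nat.choose_le_pow_div _ _) (by positivity)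
        _ = (n:ℝ)^(n+1)/(Nat.factorial (k+1) : ℝ) := by
            rw [div_mul_eq_mul_div, ← pow_add, show k+1+(n-k) = n+1 by clear key; omega]
    have hS : (∑ f : Fin n → Fin n,
        ((Finset.univ.filter (fun i : Fin n =>
          k + 1 ≤ (Finset.univ.filter (fun j : Fin n => j < i ∧ f j = f i)).card + 1)).card : ℝ))
        ≤ (n:ℝ)^(n+1) / (Nat.factorial (k+1) : ℝ) := by
      refine le_trans ?_ h1
      exact_mod_cast key
    calc (∑ f : Fin n → Fin n,
        ((Finset.univ.filter (fun i : Fin n =>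
          k + 1 ≤ (Finset.univ.filter (fun j : Fin n => j < i ∧ f j = f i)).card + 1)).card : ℝ))
        / (n:ℝ)^n
        ≤ ((n:ℝ)^(n+1) / (Nat.factorial (k+1) : ℝ)) / (n:ℝ)^n := by gcongr
      _ = (n:ℝ) / (Nat.factorial (k+1) : ℝ) := by
          rw [pow_succ]
          field_simp
      _ ≤ 4 * (n:ℝ) / (Nat.factorial (k+1) : ℝ) := by
          rw [div_le_div_iff₀ hfac hfac]
          nlinarith
  · -- k > n : choose n (k+1) = 0, LHS ≤ 0
    have hch : n.choose (k+1) = 0 := Nat.choose_eq_zero_of_lt (by clear key; omega)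
    rw [hch, zero_mul, Nat.le_zero] at key
    have : (∑ f : Fin n → Fin n,
        ((Finset.univ.filter (fun i : Fin n =>
          k + 1 ≤ (Finset.univ.filter (fun j : Fin n => j < i ∧ f j = f i)).card + 1)).card : ℝ)) = 0 := by
      exact_mod_cast key
    rw [this, zero_div]
    positivity
end

section
/- Fix integers 1 ≤ k < d ≤ n and 1 ≤ x ≤ n. In one round of the (k,d)-choice process, the probability that the x-th most loaded bin receives at least one ball equals ∑_{j=1}^{k} C(d, d-k+j)·((x/n)^{d-k+j} - ((x-1)/n)^{d-k+j})·(1 - x/n)^{k-j}. -/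
open Finset

-- card of {b : Fin n | b.val < x}
lemma aux_card_lt (n x : ℕ) (hxn : x ≤ n) :
    (Finset.univ.filter fun b : Fin n => (b : ℕ) < x).card = x := by
  have h : (Finset.univ.filter fun b : Fin n => (b : ℕ) < x) =
      (Finset.range x).attachFin (fun m hm => lt_of_lt_of_le (Finset.mem_range.mp hm) hxn) := by
    ext b
    simp [Finset.mem_attachFin]
  rw [h, Finset.card_attachFin, Finset.card_range]

-- counting functions constrained on/off a set of indices
lemma aux_count_pi (d n : ℕ) (s : Finset (Fin d)) (A B : Finset (Fin n)) :
    (Finset.univ.filter (fun g : Fin d → Fin n =>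
      ∀ i, (i ∈ s → g i ∈ A) ∧ (i ∉ s → g i ∈ B))).card
      = A.card ^ s.card * B.card ^ (d - s.card) := by
  have h : Finset.univ.filter (fun g : Fin d → Fin n =>
      ∀ i, (i ∈ s → g i ∈ A) ∧ (i ∉ s → g i ∈ B)) =
      Fintype.piFinset (fun i => if i ∈ s then A else B) := by
    ext g
    simp only [Finset.mem_filter, Finset.mem_univ, true_and, Fintype.mem_piFinset]
    constructor
    · intro h i; by_cases hi : i ∈ s <;> simp [hi, (h i).1, (h i).2]
    · intro h i
      constructor <;> intro hi <;> have := h i <;> simp [hi] at this <;> exact this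
  rw [h, Fintype.card_piFinset,
    ← Finset.prod_filter_mul_prod_filter_not Finset.univ (· ∈ s)]
  have h1 : Finset.univ.filter (· ∈ s) = s := by ext i; simp
  have h2 : (Finset.univ.filter (fun i => ¬ i ∈ s)) = sᶜ := by ext i; simp
  rw [h1, h2]
  have e1 : ∏ i ∈ s, (if i ∈ s then A else B).card = A.card ^ s.card := by
    rw [Finset.prod_congr rfl (fun i hi => by rw [if_pos hi]), Finset.prod_const]
  have e2 : ∏ i ∈ sᶜ, (if i ∈ s then A else B).card = B.card ^ (d - s.card) := by
    rw [Finset.prod_congr rfl (fun i hi => by rw [if_neg (by simpa using hi)]),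
      Finset.prod_const, Finset.card_compl, Fintype.card_fin]
  rw [e1, e2]

lemma aux_high_card (n x : ℕ) (hxn : x ≤ n) :
    (Finset.univ.filter fun b : Fin n => ¬ (b : ℕ) < x).card = n - x := by
  have h := Finset.card_filter_add_card_filter_not
    (s := (Finset.univ : Finset (Fin n))) (p := fun b : Fin n => (b : ℕ) < x)
  rw [aux_card_lt n x hxn] at h
  simp only [Finset.card_univ, Fintype.card_fin] at h
  omega

lemma aux_fiber (d n x : ℕ) (hx1 : 1 ≤ x) (hxn : x ≤ n) (s : Finset (Fin d)) :
    (Finset.univ.filter (fun g : Fin d → Fin n =>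
      (Finset.univ.filter (fun i => (g i : ℕ) < x)) = s ∧ ∃ i, (g i : ℕ) = x - 1)).card
    = x ^ s.card * (n - x) ^ (d - s.card) - (x - 1) ^ s.card * (n - x) ^ (d - s.card) := by
  classical
  set Low : Finset (Fin n) := Finset.univ.filter (fun b => (b : ℕ) < x) with hLow
  set A' : Finset (Fin n) := Finset.univ.filter (fun b => (b : ℕ) < x - 1) with hA'
  set High : Finset (Fin n) := Finset.univ.filter (fun b => ¬ (b : ℕ) < x) with hHigh
  -- total fiber
  have hT : Finset.univ.filter (fun g : Fin d → Fin n =>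
      (Finset.univ.filter (fun i => (g i : ℕ) < x)) = s)
      = Finset.univ.filter (fun g : Fin d → Fin n =>
        ∀ i, (i ∈ s → g i ∈ Low) ∧ (i ∉ s → g i ∈ High)) := by
    ext g
    simp only [Finset.mem_filter, Finset.mem_univ, true_and, Finset.ext_iff, hLow, hHigh]
    constructor
    · intro h i
      constructor
      · intro hi; exact (h i).mpr hi
      · intro hi hc; exact hi ((h i).mp hc)
    · intro h i
      constructor
      · intro hc
        by_contra hi
        exact ((h i).2 hi) hc
      · intro hi; exact (h i).1 hi
  -- bad fiber (no sample equal to x-1)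
  have hB : Finset.univ.filter (fun g : Fin d → Fin n =>
      ((Finset.univ.filter (fun i => (g i : ℕ) < x)) = s ∧ ¬ ∃ i, (g i : ℕ) = x - 1))
      = Finset.univ.filter (fun g : Fin d → Fin n =>
        ∀ i, (i ∈ s → g i ∈ A') ∧ (i ∉ s → g i ∈ High)) := by
    ext g
    simp only [Finset.mem_filter, Finset.mem_univ, true_and, Finset.ext_iff, not_exists,
      hLow, hA', hHigh]
    constructor
    · rintro ⟨h1, h2⟩ i
      constructor
      · intro hi
        have := (h1 i).mpr hi
        have := h2 i
        omega
      · intro hi hc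
        exact hi ((h1 i).mp hc)
    · intro h
      constructor
      · intro i
        constructor
        · intro hc
          by_contra hi
          exact ((h i).2 hi) hc
        · intro hi
          have := (h i).1 hi
          omega
      · intro i hc
        by_cases hi : i ∈ s
        · have := (h i).1 hi; omega
        · have := (h i).2 hi; omega
  have hLowc : Low.card = x := aux_card_lt n x hxn
  have hA'c : A'.card = x - 1 := aux_card_lt n (x - 1) (by omega)
  have hHighc : High.card = n - x := aux_high_card n x hxn
  have hTc : (Finset.univ.filter (fun g : Fin d → Fin n =>
      (Finset.univ.filter (fun i => (g i : ℕ) < x)) = s)).card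
      = x ^ s.card * (n - x) ^ (d - s.card) := by
    rw [hT, aux_count_pi, hLowc, hHighc]
  have hBc : (Finset.univ.filter (fun g : Fin d → Fin n =>
      ((Finset.univ.filter (fun i => (g i : ℕ) < x)) = s ∧ ¬ ∃ i, (g i : ℕ) = x - 1))).card
      = (x - 1) ^ s.card * (n - x) ^ (d - s.card) := by
    rw [hB, aux_count_pi, hA'c, hHighc]
  have key := Finset.card_filter_add_card_filter_not
    (s := Finset.univ.filter (fun g : Fin d → Fin n =>
      (Finset.univ.filter (fun i => (g i : ℕ) < x)) = s))
    (p := fun g : Fin d → Fin n => ∃ i, (g i : ℕ) = x - 1)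
  rw [Finset.filter_filter, Finset.filter_filter, hTc, hBc] at key
  exact Nat.eq_sub_of_add_eq key

/-- One round of the `(k,d)`-choice process: `d` bins are sampled i.u.r. with
replacement (`g : Fin d → Fin n` uniform) and `k` balls go into the `k` least loaded
sampled bins.  Bins are indexed by load rank (index `x - 1` is the `x`-th most loaded
bin, light bins have index `≥ x`).  The `x`-th most loaded bin receives at least one
ball iff it is sampled and fewer than `k` samples hit light bins; this has probability
`∑_{j=1}^{k} C(d, d-k+j) ((x/n)^{d-k+j} - ((x-1)/n)^{d-k+j}) (1-x/n)^{k-j}`. -/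
theorem stmt_10 (k d n x : ℕ) (hk : 1 ≤ k) (hkd : k < d) (hdn : d ≤ n)
    (hx1 : 1 ≤ x) (hxn : x ≤ n) :
    ((Finset.univ.filter (fun g : Fin d → Fin n =>
        (Finset.univ.filter (fun i : Fin d => x ≤ (g i : ℕ))).card < k ∧
          ∃ i : Fin d, (g i : ℕ) = x - 1)).card : ℝ)
      / (n : ℝ) ^ d =
    ∑ j ∈ Finset.Icc 1 k,
      (d.choose (d - k + j) : ℝ) *
        (((x : ℝ) / (n : ℝ)) ^ (d - k + j) - (((x : ℝ) - 1) / (n : ℝ)) ^ (d - k + j)) *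
        (1 - (x : ℝ) / (n : ℝ)) ^ (k - j) := by
  classical
  -- Step 1: rewrite the predicate via the number of "low" samples
  have hpred : ∀ g : Fin d → Fin n,
      ((Finset.univ.filter (fun i : Fin d => x ≤ (g i : ℕ))).card < k ↔
        d - k < (Finset.univ.filter (fun i : Fin d => (g i : ℕ) < x)).card) := by
    intro g
    have h := Finset.card_filter_add_card_filter_not
      (s := (Finset.univ : Finset (Fin d))) (p := fun i : Fin d => x ≤ (g i : ℕ))
    have hxe : Finset.univ.filter (fun i : Fin d => ¬ x ≤ (g i : ℕ))
        = Finset.univ.filter (fun i : Fin d => (g i : ℕ) < x) := by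
      ext i; simp [Nat.not_le]
    rw [hxe] at h
    simp only [Finset.card_univ, Fintype.card_fin] at h
    omega
  have hE : Finset.univ.filter (fun g : Fin d → Fin n =>
        (Finset.univ.filter (fun i : Fin d => x ≤ (g i : ℕ))).card < k ∧
          ∃ i : Fin d, (g i : ℕ) = x - 1)
      = Finset.univ.filter (fun g : Fin d → Fin n =>
        d - k < (Finset.univ.filter (fun i : Fin d => (g i : ℕ) < x)).card ∧
          ∃ i : Fin d, (g i : ℕ) = x - 1) := by
    ext g
    simp only [Finset.mem_filter, Finset.mem_univ, true_and, hpred g]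
  rw [hE]
  -- Step 2: fiberwise count over the set of low indices
  have hsum : (Finset.univ.filter (fun g : Fin d → Fin n =>
        d - k < (Finset.univ.filter (fun i : Fin d => (g i : ℕ) < x)).card ∧
          ∃ i : Fin d, (g i : ℕ) = x - 1)).card
      = ∑ s ∈ (Finset.univ : Finset (Finset (Fin d))),
          ((Finset.univ.filter (fun g : Fin d → Fin n =>
            d - k < (Finset.univ.filter (fun i : Fin d => (g i : ℕ) < x)).card ∧
              ∃ i : Fin d, (g i : ℕ) = x - 1)).filter
            (fun g => (Finset.univ.filter (fun i : Fin d => (g i : ℕ) < x)) = s)).card := by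
    exact Finset.card_eq_sum_card_fiberwise (fun g _ => Finset.mem_univ _)
  have hfib : ∀ s : Finset (Fin d),
      ((Finset.univ.filter (fun g : Fin d → Fin n =>
            d - k < (Finset.univ.filter (fun i : Fin d => (g i : ℕ) < x)).card ∧
              ∃ i : Fin d, (g i : ℕ) = x - 1)).filter
            (fun g => (Finset.univ.filter (fun i : Fin d => (g i : ℕ) < x)) = s)).card
      = if d - k < s.card then
          x ^ s.card * (n - x) ^ (d - s.card) - (x - 1) ^ s.card * (n - x) ^ (d - s.card)
        else 0 := by
    intro s
    rw [Finset.filter_filter]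
    by_cases hs : d - k < s.card
    · rw [if_pos hs, ← aux_fiber d n x hx1 hxn s]
      congr 1
      ext g
      simp only [Finset.mem_filter, Finset.mem_univ, true_and]
      constructor
      · rintro ⟨⟨_, h2⟩, h3⟩; exact ⟨h3, h2⟩
      · rintro ⟨h1, h2⟩; exact ⟨⟨by rw [h1]; exact hs, h2⟩, h1⟩
    · rw [if_neg hs, Finset.card_eq_zero, Finset.filter_eq_empty_iff]
      rintro g -
      rintro ⟨⟨h1, -⟩, h2⟩
      rw [h2] at h1
      exact hs h1
  have hcount : (Finset.univ.filter (fun g : Fin d → Fin n =>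
        d - k < (Finset.univ.filter (fun i : Fin d => (g i : ℕ) < x)).card ∧
          ∃ i : Fin d, (g i : ℕ) = x - 1)).card
      = ∑ j ∈ Finset.Icc 1 k, d.choose (d - k + j) *
          (x ^ (d - k + j) * (n - x) ^ (k - j) - (x - 1) ^ (d - k + j) * (n - x) ^ (k - j)) := by
    rw [hsum]
    simp only [hfib]
    -- group by cardinality
    have hmaps : ∀ s ∈ (Finset.univ : Finset (Finset (Fin d))),
        s.card ∈ Finset.range (d + 1) := by
      intro s _
      simp only [Finset.mem_range]
      have := Finset.card_le_univ s
      simp only [Finset.card_univ, Fintype.card_fin] at this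
      exact Nat.lt_succ_of_le this
    rw [← Finset.sum_fiberwise_of_maps_to hmaps]
    have hinner : ∀ m ∈ Finset.range (d + 1),
        (∑ s ∈ (Finset.univ : Finset (Finset (Fin d))).filter (fun s => s.card = m),
          (if d - k < s.card then
            x ^ s.card * (n - x) ^ (d - s.card) - (x - 1) ^ s.card * (n - x) ^ (d - s.card)
          else 0))
        = d.choose m * (if d - k < m then
            x ^ m * (n - x) ^ (d - m) - (x - 1) ^ m * (n - x) ^ (d - m) else 0) := by
      intro m _
      rw [Finset.sum_congr rfl (fun s hs => by
        rw [(Finset.mem_filter.mp hs).2]), Finset.sum_const]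
      have hcardf : ((Finset.univ : Finset (Finset (Fin d))).filter
          (fun s => s.card = m)).card = d.choose m := by
        have hps : (Finset.univ : Finset (Finset (Fin d))).filter (fun s => s.card = m)
            = Finset.powersetCard m (Finset.univ : Finset (Fin d)) := by
          rw [Finset.powersetCard_eq_filter, Finset.powerset_univ]
        rw [hps, Finset.card_powersetCard, Finset.card_univ, Fintype.card_fin]
      rw [hcardf, smul_eq_mul]
    rw [Finset.sum_congr rfl hinner]
    simp only [mul_ite, mul_zero]
    rw [← Finset.sum_filter]
    have hIcc : (Finset.range (d + 1)).filter (fun m => d - k < m)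
        = Finset.Icc (d - k + 1) d := by
      ext m
      simp only [Finset.mem_filter, Finset.mem_range, Finset.mem_Icc]
      clear * - hk hkd
      omega
    rw [hIcc]
    have hmap : Finset.Icc (d - k + 1) d
        = (Finset.Icc 1 k).map (addLeftEmbedding (d - k)) := by
      rw [Finset.map_add_left_Icc]
      congr 1
      clear * - hk hkd
      omega
    rw [hmap, Finset.sum_map]
    refine Finset.sum_congr rfl fun j hj => ?_
    obtain ⟨hj1, hjk⟩ := Finset.mem_Icc.mp hj
    have : addLeftEmbedding (d - k) j = d - k + j := rfl
    rw [this]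
    congr 1 <;> try rfl
    have hdm : d - (d - k + j) = k - j := by clear * - hk hkd hj1 hjk; omega
    rw [hdm]
  rw [hcount]
  -- Step 3: real arithmetic
  have hn0 : (n : ℝ) ≠ 0 := Nat.cast_ne_zero.mpr (by clear * - hx1 hxn; omega)
  rw [Nat.cast_sum, Finset.sum_div]
  refine Finset.sum_congr rfl fun j hj => ?_
  obtain ⟨hj1, hjk⟩ := Finset.mem_Icc.mp hj
  have hle : (x - 1) ^ (d - k + j) * (n - x) ^ (k - j)
      ≤ x ^ (d - k + j) * (n - x) ^ (k - j) :=
    Nat.mul_le_mul_right _ (Nat.pow_le_pow_left (Nat.sub_le x 1) _)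
  have hx1' : ((x - 1 : ℕ) : ℝ) = (x : ℝ) - 1 := by
    push_cast [Nat.cast_sub hx1]; ring
  have hnx' : ((n - x : ℕ) : ℝ) = (n : ℝ) - (x : ℝ) := by
    push_cast [Nat.cast_sub hxn]; ring
  rw [Nat.cast_mul, Nat.cast_sub hle]
  push_cast [hx1', hnx']
  have h1 : (1 : ℝ) - (x : ℝ) / n = ((n : ℝ) - x) / n := by field_simp
  rw [h1, div_pow, div_pow, div_pow]
  have hnd : (n : ℝ) ^ d = (n : ℝ) ^ (d - k + j) * (n : ℝ) ^ (k - j) := by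
    rw [← pow_add]
    congr 1
    clear * - hk hkd hj1 hjk
    omega
  rw [hnd]
  field_simp
end

section
/- For integers 1 ≤ k < d ≤ n, the function p(x) = C(d, d-k+1)·(x/n)^{d-k}·(d-k+1)/n satisfies: p_x ≤ p(x) for all 1 ≤ x ≤ n, where p_x = ∑_{j=1}^{k} C(d,d-k+j)·((x/n)^{d-k+j}-((x-1)/n)^{d-k+j})·(1-x/n)^{k-j}. -/
open Finset

private lemma pow_sub_pow_le_aux {a b : ℝ} (ha : 0 ≤ a) (hab : a ≤ b) (i : ℕ) :
    b ^ i - a ^ i ≤ i * b ^ (i - 1) * (b - a) := by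
  have hb : 0 ≤ b := ha.trans hab
  rw [← geom_sum₂_mul b a i]
  have hsum : (∑ l ∈ range i, b ^ l * a ^ (i - 1 - l)) ≤ i * b ^ (i - 1) := by
    calc (∑ l ∈ range i, b ^ l * a ^ (i - 1 - l))
        ≤ ∑ _l ∈ range i, b ^ (i - 1) := by
          apply Finset.sum_le_sum
          intro l hl
          simp only [Finset.mem_range] at hl
          calc b ^ l * a ^ (i - 1 - l) ≤ b ^ l * b ^ (i - 1 - l) := by gcongr
            _ = b ^ (l + (i - 1 - l)) := (pow_add b l _).symm
            _ = b ^ (i - 1) := by congr 1; omega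
      _ = i * b ^ (i - 1) := by
          rw [Finset.sum_const, Finset.card_range, nsmul_eq_mul]
  exact mul_le_mul_of_nonneg_right hsum (by linarith)

private lemma binom_tail_le (N s : ℕ) (hs : s ≤ N) {t : ℝ} (ht0 : 0 ≤ t) (ht1 : t ≤ 1) :
    ∑ i ∈ Finset.Icc s N, (N.choose i : ℝ) * (t ^ i * (1 - t) ^ (N - i)) ≤
      (N.choose s : ℝ) * t ^ s := by
  have h1t : 0 ≤ 1 - t := by linarith
  calc
    ∑ i ∈ Finset.Icc s N, (N.choose i : ℝ) * (t ^ i * (1 - t) ^ (N - i))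
        ≤ ∑ i ∈ Finset.Icc s N,
            ((N.choose s : ℝ) * ((N - s).choose (i - s) : ℝ)) * (t ^ i * (1 - t) ^ (N - i)) := by
          apply Finset.sum_le_sum
          intro i hi
          simp only [Finset.mem_Icc] at hi
          have hnat : N.choose i ≤ N.choose s * (N - s).choose (i - s) := by
            calc N.choose i = N.choose i * 1 := (mul_one _).symm
              _ ≤ N.choose i * i.choose s :=
                  Nat.mul_le_mul_left _ (Nat.choose_pos hi.1)
              _ = N.choose s * (N - s).choose (i - s) := Nat.choose_mul (n := N) hi.1
          have hcast : (N.choose i : ℝ) ≤ (N.choose s : ℝ) * ((N - s).choose (i - s) : ℝ) := by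
            exact_mod_cast hnat
          exact mul_le_mul_of_nonneg_right hcast (by positivity)
      _ = (N.choose s : ℝ) * t ^ s *
            ∑ u ∈ Finset.range (N - s + 1),
              ((N - s).choose u : ℝ) * (t ^ u * (1 - t) ^ (N - s - u)) := by
          rw [Finset.mul_sum]
          apply Finset.sum_nbij' (fun i => i - s) (fun u => s + u)
          · intro i hi; simp only [Finset.mem_Icc] at hi; simp only [Finset.mem_range]; omega
          · intro u hu; simp only [Finset.mem_range] at hu; simp only [Finset.mem_Icc]; omega
          · intro i hi; simp only [Finset.mem_Icc] at hi; omega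
          · intro u _; omega
          · intro i hi
            simp only [Finset.mem_Icc] at hi
            have h2 : N - i = N - s - (i - s) := by omega
            have h3 : t ^ i = t ^ s * t ^ (i - s) := by
              rw [← pow_add]; congr 1; omega
            rw [h2, h3]; ring
      _ = (N.choose s : ℝ) * t ^ s := by
          have h : ∑ u ∈ Finset.range (N - s + 1),
              ((N - s).choose u : ℝ) * (t ^ u * (1 - t) ^ (N - s - u)) = 1 := by
            calc ∑ u ∈ Finset.range (N - s + 1),
                  ((N - s).choose u : ℝ) * (t ^ u * (1 - t) ^ (N - s - u))
                = ∑ u ∈ Finset.range (N - s + 1),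
                    t ^ u * (1 - t) ^ (N - s - u) * ((N - s).choose u : ℝ) :=
                  Finset.sum_congr rfl fun u _ => by ring
              _ = (t + (1 - t)) ^ (N - s) := (add_pow t (1 - t) (N - s)).symm
              _ = 1 := by norm_num
          rw [h, mul_one]

/-- For `1 ≤ k < d ≤ n` and `1 ≤ x ≤ n`, the probability
`p_x = ∑_{j=1}^k C(d,d-k+j)((x/n)^{d-k+j} - ((x-1)/n)^{d-k+j})(1-x/n)^{k-j}`
is at most `C(d, d-k+1) (x/n)^{d-k} (d-k+1)/n`. -/
theorem stmt_11 (k d n x : ℕ) (hk : 1 ≤ k) (hkd : k < d) (hdn : d ≤ n)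
    (hx1 : 1 ≤ x) (hxn : x ≤ n) :
    ∑ j ∈ Finset.Icc 1 k,
        (d.choose (d - k + j) : ℝ) *
          (((x : ℝ) / (n : ℝ)) ^ (d - k + j) - (((x : ℝ) - 1) / (n : ℝ)) ^ (d - k + j)) *
          (1 - (x : ℝ) / (n : ℝ)) ^ (k - j) ≤
      (d.choose (d - k + 1) : ℝ) * ((x : ℝ) / (n : ℝ)) ^ (d - k) *
        ((d : ℝ) - (k : ℝ) + 1) / (n : ℝ) := by
  have hnpos : 0 < n := by omega
  have hn : (0 : ℝ) < n := by exact_mod_cast hnpos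
  set b : ℝ := (x : ℝ) / n with hbdef
  set a : ℝ := ((x : ℝ) - 1) / n with hadef
  have hx1R : (1 : ℝ) ≤ (x : ℝ) := by exact_mod_cast hx1
  have hxnR : (x : ℝ) ≤ (n : ℝ) := by exact_mod_cast hxn
  have ha0 : 0 ≤ a := by apply div_nonneg <;> linarith
  have hab : a ≤ b := by rw [hadef, hbdef]; gcongr; linarith
  have hb0 : 0 ≤ b := by positivity
  have hb1 : b ≤ 1 := by rw [hbdef, div_le_one hn]; exact hxnR
  have h1b : (0 : ℝ) ≤ 1 - b := by linarith
  have hba : b - a = 1 / n := by rw [hbdef, hadef]; field_simp; ring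
  calc
    ∑ j ∈ Finset.Icc 1 k,
        (d.choose (d - k + j) : ℝ) * (b ^ (d - k + j) - a ^ (d - k + j)) * (1 - b) ^ (k - j)
        ≤ ∑ j ∈ Finset.Icc 1 k, (d : ℝ) / n *
            (((d - 1).choose (d - k + j - 1) : ℝ) *
              (b ^ (d - k + j - 1) * (1 - b) ^ ((d - 1) - (d - k + j - 1)))) := by
          apply Finset.sum_le_sum
          intro j hj
          simp only [Finset.mem_Icc] at hj
          have hkj : k - j = (d - 1) - (d - k + j - 1) := by omega
          have hp := pow_sub_pow_le_aux ha0 hab (d - k + j)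
          rw [hba] at hp
          have keyN : d * (d - 1).choose (d - k + j - 1) = d.choose (d - k + j) * (d - k + j) := by
            have h := Nat.add_one_mul_choose_eq (d - 1) (d - k + j - 1)
            simpa [Nat.succ_eq_add_one, show d - 1 + 1 = d by omega,
              show d - k + j - 1 + 1 = d - k + j by omega] using h
          have keyR : (d : ℝ) * ((d - 1).choose (d - k + j - 1) : ℝ) =
              (d.choose (d - k + j) : ℝ) * ((d - k + j : ℕ) : ℝ) := by exact_mod_cast keyN
          calc (d.choose (d - k + j) : ℝ) * (b ^ (d - k + j) - a ^ (d - k + j)) * (1 - b) ^ (k - j)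
              ≤ (d.choose (d - k + j) : ℝ) *
                  (((d - k + j : ℕ) : ℝ) * b ^ (d - k + j - 1) * (1 / n)) * (1 - b) ^ (k - j) := by
                apply mul_le_mul_of_nonneg_right _ (by positivity)
                exact mul_le_mul_of_nonneg_left hp (by positivity)
            _ = (d : ℝ) / n *
                  (((d - 1).choose (d - k + j - 1) : ℝ) *
                    (b ^ (d - k + j - 1) * (1 - b) ^ ((d - 1) - (d - k + j - 1)))) := by
                rw [← hkj]
                linear_combination (-(b ^ (d - k + j - 1) * (1 - b) ^ (k - j)) / n) * keyR
      _ = (d : ℝ) / n * ∑ r ∈ Finset.Icc (d - k) (d - 1),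
            ((d - 1).choose r : ℝ) * (b ^ r * (1 - b) ^ ((d - 1) - r)) := by
          rw [Finset.mul_sum]
          apply Finset.sum_nbij' (fun j => d - k + j - 1) (fun r => r - (d - k) + 1)
          · intro j hj; simp only [Finset.mem_Icc] at hj ⊢; omega
          · intro r hr; simp only [Finset.mem_Icc] at hr ⊢; omega
          · intro j hj; simp only [Finset.mem_Icc] at hj; omega
          · intro r hr; simp only [Finset.mem_Icc] at hr; omega
          · intro j _; rfl
      _ ≤ (d : ℝ) / n * (((d - 1).choose (d - k) : ℝ) * b ^ (d - k)) := by
          exact mul_le_mul_of_nonneg_left (binom_tail_le (d - 1) (d - k) (by omega) hb0 hb1) (by positivity)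
      _ = (d.choose (d - k + 1) : ℝ) * b ^ (d - k) * ((d : ℝ) - (k : ℝ) + 1) / n := by
          have keyN : d * (d - 1).choose (d - k) = d.choose (d - k + 1) * (d - k + 1) := by
            have h := Nat.add_one_mul_choose_eq (d - 1) (d - k)
            simpa [Nat.succ_eq_add_one, show d - 1 + 1 = d by omega] using h
          have keyR : (d : ℝ) * ((d - 1).choose (d - k) : ℝ) =
              (d.choose (d - k + 1) : ℝ) * ((d : ℝ) - (k : ℝ) + 1) := by
            have hc : ((d - k + 1 : ℕ) : ℝ) = (d : ℝ) - (k : ℝ) + 1 := by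
              push_cast [Nat.cast_sub hkd.le]; ring
            rw [← hc]; exact_mod_cast keyN
          linear_combination (b ^ (d - k) / n) * keyR
end
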